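/- For 0 < q < 1, the function f(q) = 2 - q + 2·((1-q)/q)·ln(1-q) is positive; in particular f(0.8010) > 0.39. -/

import Mathlib

/-- Key inequality: for 0 < x < 1, (x - x⁻¹)/2 < log x. -/
lemma log_gt_aux {x : ℝ} (hx : 0 < x) (hx1 : x < 1) :
    (x - x⁻¹) / 2 < Real.log x := by
  have hxi : 1 < x⁻¹ := (one_lt_inv₀ hx).2 hx1
  have ht : 0 < Real.log x⁻¹ := Real.log_pos hxi
  have hs : Real.log x⁻¹ < Real.sinh (Real.log x⁻¹) :=
    (Real.self_lt_sinh_iff).2 ht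
  have hsinh : Real.sinh (Real.log x⁻¹) = (x⁻¹ - x) / 2 := by
    rw [Real.sinh_eq, Real.exp_log (by positivity), Real.exp_neg,
      Real.exp_log (by positivity), inv_inv]
  rw [hsinh, Real.log_inv] at hs
  linarith

lemma part1 : ∀ q : ℝ, 0 < q → q < 1 →
    0 < 2 - q + 2 * ((1 - q) / q) * Real.log (1 - q) := by
  intro q hq hq1
  have hx : 0 < 1 - q := by linarith
  have hx1 : 1 - q < 1 := by linarith
  have key := log_gt_aux hx hx1
  have hc : 0 < 2 * ((1 - q) / q) := by positivity
  have h2 : 2 * ((1 - q) / q) * (((1 - q) - (1 - q)⁻¹) / 2)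
      < 2 * ((1 - q) / q) * Real.log (1 - q) :=
    (mul_lt_mul_iff_right₀ hc).2 key
  have h3 : 2 - q + 2 * ((1 - q) / q) * (((1 - q) - (1 - q)⁻¹) / 2) = 0 := by
    field_simp
    ring
  linarith

lemma exp_big : (1000 : ℝ) / 199 < Real.exp 1.628 := by
  have h : (1.50106 : ℝ) ≤ Real.exp 0.407 := by
    have := Real.sum_le_exp_of_nonneg (x := 0.407) (by norm_num) 4
    have e : ∑ i ∈ Finset.range 4, (0.407 : ℝ) ^ i / Nat.factorial i
        = 1 + 0.407 + 0.407 ^ 2 / 2 + 0.407 ^ 3 / 6 := by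
      norm_num [Finset.sum_range_succ, Nat.factorial]
    rw [e] at this
    nlinarith
  have h4 : Real.exp 1.628 = (Real.exp 0.407) ^ 4 := by
    rw [← Real.exp_nat_mul]; norm_num
  have hp : (1.50106 : ℝ) ^ 4 ≤ (Real.exp 0.407) ^ 4 := by
    gcongr
  nlinarith [hp]

lemma log199 : (-1.628 : ℝ) < Real.log 0.199 := by
  rw [Real.lt_log_iff_exp_lt (by norm_num)]
  rw [Real.exp_neg]
  rw [inv_lt_comm₀ (Real.exp_pos _) (by norm_num)]
  have := exp_big
  calc (0.199 : ℝ)⁻¹ = 1000 / 199 := by norm_num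
    _ < Real.exp 1.628 := exp_big

theorem stmt15 :
    (∀ q : ℝ, 0 < q → q < 1 →
      0 < 2 - q + 2 * ((1 - q) / q) * Real.log (1 - q)) ∧
    2 - 0.8010 + 2 * ((1 - 0.8010) / 0.8010) * Real.log (1 - 0.8010) > (0.39 : ℝ) := by
  refine ⟨part1, ?_⟩
  have h : (1 : ℝ) - 0.8010 = 0.199 := by norm_num
  rw [h]
  have := log199
  nlinarith [log199]
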